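/- Let (Δ_n)_{n≥0} be a sequence of K-linear endomorphisms of a commutative unital K-algebra A with Δ_n(1)=0, and let Δ : A[[t]] → A[[t]] be the associated K[[t]]-linear map Δ(Σ_m t^m a_m) = Σ_{n,m} t^{n+m} Δ_n(a_m). Then K(Δ)_n(a_1,…,a_n) ∈ t^{n−1}·A[[t]] for every n ≥ 2 and all a_1,…,a_n ∈ A if and only if K(Δ_m)_{m+2} = 0 identically for every m ≥ 0 (i.e. each Δ_m is a differential operator of order ≤ m+1). -/

import Mathlib

open Finset

/-- The `n`-th Koszul bracket of an operator `D` on a commutative ring. -/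
noncomputable def koszul {R : Type*} [CommRing R] (D : R → R) (n : ℕ) (a : Fin n → R) : R :=
  ∑ s ∈ (Finset.univ : Finset (Fin n)).powerset.filter fun s => s.Nonempty,
    (-1 : ℤ) ^ (n - s.card) • (D (∏ i ∈ s, a i) * ∏ i ∈ sᶜ, a i)

/-- The `K[[t]]`-linear operator on `A[[t]]` associated with a sequence of operators:
`Δ(Σ_m t^m a_m) = Σ_{n,m} t^{n+m} Δ_n(a_m)`. -/
noncomputable def assocMap {A B : Type*} [CommRing A] [CommRing B] (D : ℕ → A → B) :
    PowerSeries A → PowerSeries B :=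
  fun F => PowerSeries.mk fun p =>
    ∑ j ∈ Finset.range (p + 1), D j (PowerSeries.coeff (p - j) F)

section Aux

variable {R : Type*} [CommRing R]

/-- Commutator of an operator with multiplication by `b`. -/
def comms (D : R → R) (b : R) : R → R := fun x => D (b * x) - b * D x

/-- Iterated commutators along a list. -/
def iterC (D : R → R) (l : List R) : R → R := l.foldl comms D

lemma iterC_nil (D : R → R) : iterC D [] = D := rfl

lemma iterC_cons (D : R → R) (b : R) (l : List R) :
    iterC D (b :: l) = iterC (comms D b) l := rfl

lemma iterC_append (D : R → R) (l₁ l₂ : List R) :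
    iterC D (l₁ ++ l₂) = iterC (iterC D l₁) l₂ := by
  simp [iterC, List.foldl_append]

lemma comms_zero (b : R) : comms (fun _ => (0 : R)) b = fun _ => 0 := by
  funext x; simp [comms]

lemma iterC_zero (l : List R) : iterC (fun _ => (0 : R)) l = fun _ => 0 := by
  induction l with
  | nil => rfl
  | cons b l ih => rw [iterC_cons, comms_zero, ih]

/-- The "full" Koszul-type sum over all subsets of a finset. -/
noncomputable def Fk {ι : Type*} [DecidableEq ι] (D : R → R) (t : Finset ι) (a : ι → R) : R :=
  ∑ s ∈ t.powerset, (-1 : ℤ) ^ (t.card - s.card) • (D (∏ i ∈ s, a i) * ∏ i ∈ t \ s, a i)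

lemma Fk_insert {ι : Type*} [DecidableEq ι] (D : R → R) {t : Finset ι} {j : ι}
    (hj : j ∉ t) (a : ι → R) :
    Fk D (insert j t) a = Fk (comms D (a j)) t a := by
  unfold Fk
  rw [Finset.sum_powerset_insert hj, ← Finset.sum_add_distrib]
  apply Finset.sum_congr rfl
  intro s hs
  have hsub : s ⊆ t := Finset.mem_powerset.mp hs
  have hjs : j ∉ s := fun h => hj (hsub h)
  have hcard : s.card ≤ t.card := Finset.card_le_card hsub
  have h1 : insert j t \ s = insert j (t \ s) := Finset.insert_sdiff_of_notMem _ hjs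
  have h2 : insert j t \ insert j s = t \ s := by
    rw [Finset.insert_sdiff_insert, Finset.sdiff_insert,
      Finset.erase_eq_of_notMem (fun h => hj (Finset.mem_sdiff.mp h).1)]
  have hjts : j ∉ t \ s := fun h => hj (Finset.mem_sdiff.mp h).1
  rw [h1, h2, Finset.card_insert_of_notMem hj, Finset.card_insert_of_notMem hjs,
    Finset.prod_insert hjs, Finset.prod_insert hjts]
  have e1 : t.card + 1 - s.card = (t.card - s.card) + 1 := by omega
  have e2 : t.card + 1 - (s.card + 1) = t.card - s.card := by omega
  rw [e1, e2, comms]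
  simp only [zsmul_eq_mul]
  push_cast
  ring

lemma Fk_list {ι : Type*} [DecidableEq ι] (a : ι → R) :
    ∀ l : List ι, l.Nodup → ∀ D : R → R, Fk D l.toFinset a = iterC D (l.map a) 1 := by
  intro l
  induction l with
  | nil =>
    intro _ D
    simp [Fk, iterC]
  | cons j l ih =>
    intro hnd D
    have hj : j ∉ l.toFinset := by
      simp only [List.mem_toFinset]
      exact (List.nodup_cons.mp hnd).1
    rw [List.toFinset_cons, Fk_insert D hj a, List.map_cons, iterC_cons,
      ih (List.nodup_cons.mp hnd).2]

lemma koszul_eq_Fk {n : ℕ} (D : R → R) (hD1 : D 1 = 0) (a : Fin n → R) :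
    koszul D n a = Fk D Finset.univ a := by
  unfold koszul Fk
  rw [← Finset.sum_filter_add_sum_filter_not ((Finset.univ : Finset (Fin n)).powerset)
    (fun s => s.Nonempty)]
  have h2 : ∑ s ∈ ((Finset.univ : Finset (Fin n)).powerset.filter fun s => ¬s.Nonempty),
      (-1 : ℤ) ^ ((Finset.univ : Finset (Fin n)).card - s.card) •
        (D (∏ i ∈ s, a i) * ∏ i ∈ univ \ s, a i) = 0 := by
    apply Finset.sum_eq_zero
    intro s hs
    have : s = ∅ := by
      rcases Finset.mem_filter.mp hs with ⟨-, h⟩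
      exact Finset.not_nonempty_iff_eq_empty.mp h
    subst this
    simp [hD1]
  rw [h2, add_zero]
  apply Finset.sum_congr rfl
  intro s _
  rw [Finset.compl_eq_univ_sdiff, Finset.card_univ, Fintype.card_fin]

lemma koszul_eq_iterC {n : ℕ} (D : R → R) (hD1 : D 1 = 0) (a : Fin n → R) :
    koszul D n a = iterC D (List.ofFn a) 1 := by
  rw [koszul_eq_Fk D hD1 a, ← List.toFinset_finRange n,
    Fk_list a (List.finRange n) (List.nodup_finRange n) D, List.ofFn_eq_map]

/-- From vanishing of the `(m+2)`-nd Koszul bracket, all higher ones vanish. -/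
lemma koszul_high_vanish (D : R → R) (hD1 : D 1 = 0) (m : ℕ)
    (H : ∀ a : Fin (m + 2) → R, koszul D (m + 2) a = 0) :
    ∀ n, m + 2 ≤ n → ∀ a : Fin n → R, koszul D n a = 0 := by
  -- Step 1: vanishing in iterated-commutator form for lists of length m+2.
  have H1 : ∀ l : List R, l.length = m + 2 → iterC D l 1 = 0 := by
    intro l hl
    have a : Fin (m + 2) → R := fun i => l.get (Fin.cast hl.symm i)
    have hofn : List.ofFn (fun i : Fin (m + 2) => l.get (Fin.cast hl.symm i)) = l := by
      apply List.ext_getElem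
      · simp [hl]
      · intro i h1 h2
        simp only [List.getElem_ofFn, Fin.cast_mk, List.get_eq_getElem]
    have := H (fun i => l.get (Fin.cast hl.symm i))
    rw [koszul_eq_iterC D hD1, hofn] at this
    exact this
  -- Step 2: lists of length m+1 give multiplication operators.
  have H2 : ∀ l : List R, l.length = m + 1 → ∀ c : R, iterC D l c = c * iterC D l 1 := by
    intro l hl c
    have h0 : iterC D (l ++ [c]) 1 = 0 := H1 _ (by simp [hl])
    rw [iterC_append] at h0
    have : iterC (iterC D l) [c] 1 = iterC D l (c * 1) - c * iterC D l 1 := rfl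
    rw [this, mul_one] at h0
    exact sub_eq_zero.mp h0
  -- Step 3: all longer iterated commutators vanish.
  intro n hn a
  rw [koszul_eq_iterC D hD1 a]
  set l := List.ofFn a with hldef
  have hlen : l.length = n := by simp [hldef]
  have hsplit : l = l.take (m + 1) ++ l.drop (m + 1) := (List.take_append_drop _ _).symm
  have hlen1 : (l.take (m + 1)).length = m + 1 := by
    rw [List.length_take, hlen]; omega
  have hlen2 : (l.drop (m + 1)).length = n - (m + 1) := by rw [List.length_drop, hlen]
  have hne : l.drop (m + 1) ≠ [] := by
    intro h
    rw [h] at hlen2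
    simp at hlen2
    omega
  obtain ⟨c, l₂, hc⟩ := List.exists_cons_of_ne_nil hne
  rw [hsplit, iterC_append, hc, iterC_cons]
  have hz : comms (iterC D (l.take (m + 1))) c = fun _ => 0 := by
    funext x
    simp only [comms]
    rw [H2 _ hlen1 (c * x), H2 _ hlen1 x]
    ring
  rw [hz, iterC_zero]

lemma assocMap_C {A : Type*} [CommRing A] (D : ℕ → A → A) (h0 : ∀ j, D j 0 = 0) (b : A) :
    assocMap D (PowerSeries.C b) = PowerSeries.mk fun p => D p b := by
  unfold assocMap
  ext p
  simp only [PowerSeries.coeff_mk]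
  rw [Finset.sum_eq_single p]
  · simp
  · intro j hj hjp
    have : p - j ≠ 0 := by
      simp only [Finset.mem_range] at hj
      omega
    rw [PowerSeries.coeff_C, if_neg this, h0]
  · intro h
    exact absurd (Finset.self_mem_range_succ p) h

lemma coeff_koszul {A : Type*} [CommRing A] (D : ℕ → A → A) (h0 : ∀ j, D j 0 = 0)
    (n : ℕ) (a : Fin n → A) (p : ℕ) :
    PowerSeries.coeff p (koszul (assocMap D) n fun i => PowerSeries.C (a i)) =
      koszul (D p) n a := by
  unfold koszul
  rw [map_sum]
  apply Finset.sum_congr rfl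
  intro s _
  rw [map_zsmul]
  congr 1
  rw [← map_prod, ← map_prod, assocMap_C D h0, PowerSeries.coeff_mul_C,
    PowerSeries.coeff_mk]

end Aux

/-- `K(Δ)_n(a_1,…,a_n) ∈ t^{n−1}·A[[t]]` for all `n ≥ 2` and `a_i ∈ A`
if and only if `K(Δ_m)_{m+2} = 0` identically for every `m ≥ 0`, i.e. each `Δ_m` is a
differential operator of order ≤ m+1. -/
theorem derivedBV_order_condition (K A : Type*) [Field K] [CharZero K]
    [CommRing A] [Algebra K A]
    (Δ : ℕ → (A →ₗ[K] A)) (hΔ1 : ∀ n, Δ n 1 = 0) :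
    (∀ n : ℕ, 2 ≤ n → ∀ a : Fin n → A,
        (PowerSeries.X : PowerSeries A) ^ (n - 1) ∣
          koszul (assocMap fun i => ⇑(Δ i)) n fun i => PowerSeries.C (a i)) ↔
    (∀ m : ℕ, ∀ a : Fin (m + 2) → A, koszul (⇑(Δ m)) (m + 2) a = 0) := by
  have h0 : ∀ j, (Δ j) (0 : A) = 0 := fun j => map_zero (Δ j)
  constructor
  · intro h m a
    have h2 := h (m + 2) (by omega) a
    rw [PowerSeries.X_pow_dvd_iff] at h2
    have h3 := h2 m (by omega)
    rwa [coeff_koszul _ h0] at h3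
  · intro h n hn a
    rw [PowerSeries.X_pow_dvd_iff]
    intro p hp
    rw [coeff_koszul _ h0]
    exact koszul_high_vanish (⇑(Δ p)) (hΔ1 p) p (h p) n (by omega) a
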